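/- Let (G, u) be a unital po-group and let m : G → ℝ be a group homomorphism. Then m is relatively bounded if and only if m is bounded on the interval [0, nu] for each integer n ≥ 1. If, in addition, the positive cone of G satisfies (RDP), then m is relatively bounded if and only if m is bounded on the interval [0, u]. -/
import Mathlib


section

variable {G : Type} [AddGroup G] [PartialOrder G]
  [CovariantClass G G (· + ·) (· ≤ ·)]
  [CovariantClass G G (Function.swap (· + ·)) (· ≤ ·)]

/-- A map `m : G → ℝ` is relatively bounded if the image of every subset of `G`
bounded above and below in `G` is bounded (above and below) in `ℝ`. -/
def RelativelyBounded (m : G →+ ℝ) : Prop :=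
  ∀ W : Set G, BddAbove W → BddBelow W → BddAbove (⇑m '' W) ∧ BddBelow (⇑m '' W)

/-- The positive cone `G⁺` satisfies the Riesz Decomposition Property. -/
def ConeRDP (G : Type) [AddGroup G] [PartialOrder G] : Prop :=
  ∀ a₁ a₂ b₁ b₂ : G, 0 ≤ a₁ → 0 ≤ a₂ → 0 ≤ b₁ → 0 ≤ b₂ → a₁ + a₂ = b₁ + b₂ →
    ∃ d₁ d₂ d₃ d₄ : G, 0 ≤ d₁ ∧ 0 ≤ d₂ ∧ 0 ≤ d₃ ∧ 0 ≤ d₄ ∧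
      d₁ + d₂ = a₁ ∧ d₃ + d₄ = a₂ ∧ d₁ + d₃ = b₁ ∧ d₂ + d₄ = b₂

lemma bdd_iff_abs (m : G →+ ℝ) (S : Set G) :
    (BddAbove (⇑m '' S) ∧ BddBelow (⇑m '' S)) ↔ ∃ C : ℝ, ∀ x ∈ S, |m x| ≤ C := by
  constructor
  · rintro ⟨⟨b, hb⟩, ⟨a, ha⟩⟩
    refine ⟨max b (-a), fun x hx => ?_⟩
    have h1 := hb (Set.mem_image_of_mem m hx)
    have h2 := ha (Set.mem_image_of_mem m hx)
    rw [abs_le]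
    constructor
    · have := le_max_right b (-a); linarith
    · have := le_max_left b (-a); linarith
  · rintro ⟨C, hC⟩
    constructor
    · refine ⟨C, ?_⟩; rintro y ⟨x, hx, rfl⟩; exact (abs_le.mp (hC x hx)).2
    · refine ⟨-C, ?_⟩; rintro y ⟨x, hx, rfl⟩; exact (abs_le.mp (hC x hx)).1

/-- Lemma 4.0: for a group homomorphism `m : G → ℝ` on a unital
po-group `(G, u)`, `m` is relatively bounded iff it is bounded on each `[0, nu]`,
`n ≥ 1`; and if `G⁺` satisfies (RDP), then `m` is relatively bounded iff it is
bounded on `[0, u]`. -/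
theorem stmt1 (u : G) (hu : 0 ≤ u)
    (hstrong : ∀ g : G, ∃ n : ℕ, 1 ≤ n ∧ g ≤ n • u)
    (m : G →+ ℝ) :
    (RelativelyBounded m ↔ ∀ n : ℕ, 1 ≤ n →
      BddAbove (⇑m '' Set.Icc 0 (n • u)) ∧ BddBelow (⇑m '' Set.Icc 0 (n • u))) ∧
    (ConeRDP G → (RelativelyBounded m ↔
      BddAbove (⇑m '' Set.Icc 0 u) ∧ BddBelow (⇑m '' Set.Icc 0 u))) := by
  have hA : RelativelyBounded m ↔ ∀ n : ℕ, 1 ≤ n →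
      BddAbove (⇑m '' Set.Icc 0 (n • u)) ∧ BddBelow (⇑m '' Set.Icc 0 (n • u)) := by
    constructor
    · intro hm n _
      exact hm _ ⟨n • u, fun x hx => hx.2⟩ ⟨0, fun x hx => hx.1⟩
    · intro h W hWa hWb
      rw [bdd_iff_abs]
      obtain ⟨b, hb⟩ := hWa
      obtain ⟨a, ha⟩ := hWb
      obtain ⟨n, hn1, hn⟩ := hstrong (b - a)
      obtain ⟨C, hC⟩ := (bdd_iff_abs m _).mp (h n hn1)
      refine ⟨C + |m a|, fun x hx => ?_⟩
      have h1 : 0 ≤ x - a := sub_nonneg.mpr (ha hx)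
      have h2 : x - a ≤ n • u := le_trans (sub_le_sub_right (hb hx) a) hn
      have h3 := hC (x - a) ⟨h1, h2⟩
      have hx' : m x = m (x - a) + m a := by rw [map_sub]; ring
      rw [hx']
      calc |m (x - a) + m a| ≤ |m (x - a)| + |m a| := abs_add_le _ _
        _ ≤ C + |m a| := by linarith
  refine ⟨hA, fun hrdp => ?_⟩
  constructor
  · intro hm
    have := (hA.mp hm) 1 le_rfl
    simpa using this
  · intro hb
    rw [hA]
    intro n _
    obtain ⟨C, hC⟩ := (bdd_iff_abs m _).mp hb
    rw [bdd_iff_abs]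
    have key : ∀ k : ℕ, ∀ x ∈ Set.Icc (0 : G) (k • u), |m x| ≤ k * C := by
      intro k
      induction k with
      | zero =>
        intro x hx
        rw [zero_nsmul] at hx
        have : x = 0 := le_antisymm hx.2 hx.1
        simp [this]
      | succ k ih =>
        intro x hx
        have hx2 : x ≤ k • u + u := by rw [← succ_nsmul]; exact hx.2
        have ha2 : (0 : G) ≤ -x + (k • u + u) := by
          rw [le_neg_add_iff_add_le, add_zero]; exact hx2
        obtain ⟨d₁, d₂, d₃, d₄, p1, p2, p3, p4, e1, _, e3, e4⟩ :=
          hrdp x (-x + (k • u + u)) (k • u) u hx.1 ha2 (nsmul_nonneg hu k) hu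
            (by rw [add_neg_cancel_left])
        have hd1 : d₁ ≤ k • u := e3 ▸ le_add_of_nonneg_right p3
        have hd2 : d₂ ≤ u := e4 ▸ le_add_of_nonneg_right p4
        have hm1 := ih d₁ ⟨p1, hd1⟩
        have hm2 := hC d₂ ⟨p2, hd2⟩
        have hmx : m x = m d₁ + m d₂ := by rw [← e1, map_add]
        rw [hmx]
        calc |m d₁ + m d₂| ≤ |m d₁| + |m d₂| := abs_add_le _ _
          _ ≤ ↑k * C + C := by linarith
          _ = ↑(k + 1) * C := by push_cast; ring
    exact ⟨n * C, key n⟩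
  end
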